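/- arXiv:1304.0690 — 9 statements merged into one kernel-verified Lean document; each statement's English description precedes it below -/
import Mathlib

section
/- Let C ⊆ ℝⁿ be closed and convex and T : ℝⁿ → ℝⁿ quasi-nonexpansive with Fix(T) ∩ C ≠ ∅. Then the following are equivalent: (a) D(r) = 0 ⟺ r = 0 (where D is the function from the previous contexts); (b) for every sequence {uᵏ} ⊆ C, if lim_{k→∞}(‖uᵏ − R(uᵏ)‖ − ‖T(uᵏ) − R(T(uᵏ))‖) = 0, then lim_{k→∞} ‖uᵏ − R(uᵏ)‖ = 0, where R := P_{Fix(T)} is the metric projection onto Fix(T). -/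
open scoped RealInnerProductSpace

open Filter Metric
theorem stmt_8 (n : ℕ) (T : EuclideanSpace ℝ (Fin n) → EuclideanSpace ℝ (Fin n))
    (hFix : {x | T x = x}.Nonempty)
    (hqne : ∀ x : EuclideanSpace ℝ (Fin n), ∀ w ∈ {x | T x = x}, ‖T x - w‖ ≤ ‖x - w‖)
    (C : Set (EuclideanSpace ℝ (Fin n))) (hC : IsClosed C) (hCconv : Convex ℝ C)
    (hint : ({x | T x = x} ∩ C).Nonempty)
    (D : ℝ → EReal)
    (hD : ∀ r : ℝ, D r = sInf ((fun u => ((Metric.infDist u {x | T x = x}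
        - Metric.infDist (T u) {x | T x = x} : ℝ) : EReal)) ''
        ({u | Metric.infDist u {x | T x = x} ≥ r} ∩ C)))
    (R : EuclideanSpace ℝ (Fin n) → EuclideanSpace ℝ (Fin n))
    (hR : ∀ u, R u ∈ {x | T x = x} ∧ dist u (R u) = Metric.infDist u {x | T x = x}) :
    ((∀ r : ℝ, 0 ≤ r → (D r = 0 ↔ r = 0)) ↔
      (∀ u : ℕ → EuclideanSpace ℝ (Fin n), (∀ k, u k ∈ C) →
        Filter.Tendsto (fun k => ‖u k - R (u k)‖ - ‖T (u k) - R (T (u k))‖)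
          Filter.atTop (nhds 0) →
        Filter.Tendsto (fun k => ‖u k - R (u k)‖) Filter.atTop (nhds 0))) := by
  set F := {x | T x = x} with hF
  have hd : ∀ u, ‖u - R u‖ = Metric.infDist u F := fun u => by
    rw [← dist_eq_norm]; exact (hR u).2
  have hmono : ∀ u, Metric.infDist (T u) F ≤ Metric.infDist u F := fun u =>
    calc Metric.infDist (T u) F ≤ dist (T u) (R u) :=
          Metric.infDist_le_dist_of_mem (hR u).1
      _ = ‖T u - R u‖ := dist_eq_norm _ _
      _ ≤ ‖u - R u‖ := hqne u (R u) (hR u).1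
      _ = Metric.infDist u F := hd u
  have hDnn : ∀ r : ℝ, (0 : EReal) ≤ D r := by
    intro r; rw [hD r]
    apply le_sInf
    rintro x ⟨u, hu, rfl⟩
    show (0 : EReal) ≤ ((Metric.infDist u F - Metric.infDist (T u) F : ℝ) : EReal)
    exact_mod_cast sub_nonneg.mpr (hmono u)
  have hD0 : D 0 = 0 := by
    obtain ⟨z, hzF, hzC⟩ := hint
    refine le_antisymm ?_ (hDnn 0)
    rw [hD 0]
    have hz : Metric.infDist z F = 0 := Metric.infDist_zero_of_mem hzF
    have hTz : T z = z := hzF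
    have : ((Metric.infDist z F - Metric.infDist (T z) F : ℝ) : EReal) = 0 := by
      rw [hTz, hz]; norm_num
    rw [← this]
    exact sInf_le ⟨z, ⟨Metric.infDist_nonneg, hzC⟩, rfl⟩
  constructor
  · intro ha u huC hconv
    have hconv' : Tendsto (fun k => Metric.infDist (u k) F - Metric.infDist (T (u k)) F)
        atTop (nhds 0) := by simpa only [hd] using hconv
    have hgoal : Tendsto (fun k => Metric.infDist (u k) F) atTop (nhds 0) := by
      rw [Metric.tendsto_atTop]
      intro ε hε
      have hDne : D ε ≠ 0 := fun h => hε.ne' ((ha ε hε.le).mp h)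
      have hDε : (0 : EReal) < D ε := lt_of_le_of_ne (hDnn ε) (Ne.symm hDne)
      obtain ⟨x, hx0, hxD⟩ := exists_between hDε
      have hxtop : x ≠ ⊤ := fun h => (not_top_lt (h ▸ hxD)).elim
      have hxbot : x ≠ ⊥ := fun h => by simp [h] at hx0
      set δ := x.toReal with hδ
      have hδx : (δ : EReal) = x := EReal.coe_toReal hxtop hxbot
      have hδ0 : 0 < δ := by
        have := hx0
        rw [← hδx] at this
        exact_mod_cast this
      rw [Metric.tendsto_atTop] at hconv'
      obtain ⟨N, hN⟩ := hconv' δ hδ0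
      refine ⟨N, fun k hk => ?_⟩
      have hkb := hN k hk
      rw [Real.dist_eq, sub_zero] at hkb
      have hle : Metric.infDist (u k) F - Metric.infDist (T (u k)) F < δ :=
        (abs_lt.mp hkb).2
      by_contra hcon
      rw [Real.dist_eq, sub_zero, not_lt,
        abs_of_nonneg Metric.infDist_nonneg] at hcon
      have hmem : ((Metric.infDist (u k) F - Metric.infDist (T (u k)) F : ℝ) : EReal) ∈
          ((fun u => ((Metric.infDist u F - Metric.infDist (T u) F : ℝ) : EReal)) ''
            ({u | Metric.infDist u F ≥ ε} ∩ C)) := ⟨u k, ⟨hcon, huC k⟩, rfl⟩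
      have : D ε ≤ ((Metric.infDist (u k) F - Metric.infDist (T (u k)) F : ℝ) : EReal) := by
        rw [hD ε]; exact sInf_le hmem
      have : (δ : EReal) < ((Metric.infDist (u k) F - Metric.infDist (T (u k)) F : ℝ) : EReal) :=
        lt_of_lt_of_le (hδx ▸ hxD) this
      exact absurd (by exact_mod_cast this) (not_lt.mpr hle.le)
    simpa only [hd] using hgoal
  · intro hb r hr
    constructor
    · intro hDr
      by_contra hrne
      have hrpos : 0 < r := hr.lt_of_ne (Ne.symm hrne)
      have hseq : ∀ k : ℕ, ∃ u, (Metric.infDist u F ≥ r ∧ u ∈ C) ∧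
          Metric.infDist u F - Metric.infDist (T u) F < 1 / (k + 1) := by
        intro k
        have hpos : (0 : ℝ) < 1 / (k + 1) := by positivity
        have h1 : D r < ((1 / ((k : ℝ) + 1) : ℝ) : EReal) := by
          rw [hDr]; exact_mod_cast hpos
        rw [hD r] at h1
        obtain ⟨y, hy, hylt⟩ := sInf_lt_iff.mp h1
        obtain ⟨v, hv, rfl⟩ := hy
        refine ⟨v, hv, ?_⟩
        have : ((Metric.infDist v F - Metric.infDist (T v) F : ℝ) : EReal) <
            ((1 / ((k : ℝ) + 1) : ℝ) : EReal) := hylt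
        exact_mod_cast this
      choose u hu hlt using hseq
      have huC : ∀ k, u k ∈ C := fun k => (hu k).2
      have hten : Tendsto (fun k => Metric.infDist (u k) F - Metric.infDist (T (u k)) F)
          atTop (nhds 0) := by
        apply squeeze_zero (fun k => sub_nonneg.mpr (hmono (u k))) (fun k => (hlt k).le)
        exact tendsto_one_div_add_atTop_nhds_zero_nat
      have := hb u huC (by simpa only [hd] using hten)
      rw [show (fun k => ‖u k - R (u k)‖) = fun k => Metric.infDist (u k) F from
        funext fun k => hd _] at this
      have hler : r ≤ 0 := ge_of_tendsto this (Filter.Eventually.of_forall fun k => (hu k).1)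
      exact absurd hler (not_le.mpr hrpos)
    · rintro rfl; exact hD0
end

section
/- Let C ⊆ ℝⁿ be closed, bounded and convex, and let T : ℝⁿ → ℝⁿ have Fix(T) ∩ C ≠ ∅. If T is strongly quasi-nonexpansive (α-SQNE for some α > 0) and I − T is closed at 0, then T is quasi-shrinking on C, i.e., the function D (defined in context) satisfies D(r) = 0 ⟺ r = 0. -/
open scoped RealInnerProductSpace

theorem stmt_9 (n : ℕ) (T : EuclideanSpace ℝ (Fin n) → EuclideanSpace ℝ (Fin n))
    (hFix : {x | T x = x}.Nonempty)
    (C : Set (EuclideanSpace ℝ (Fin n))) (hC : IsClosed C)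
    (hCbdd : Bornology.IsBounded C) (hCconv : Convex ℝ C)
    (hint : ({x | T x = x} ∩ C).Nonempty)
    (α : ℝ) (hα : 0 < α)
    (hsqne : ∀ x : EuclideanSpace ℝ (Fin n), ∀ w ∈ {x | T x = x},
      ‖T x - w‖ ^ 2 ≤ ‖x - w‖ ^ 2 - α * ‖x - T x‖ ^ 2)
    (hclosed : ∀ (x : ℕ → EuclideanSpace ℝ (Fin n)) (y : EuclideanSpace ℝ (Fin n)),
      Filter.Tendsto x Filter.atTop (nhds y) →
      Filter.Tendsto (fun k => ‖T (x k) - x k‖) Filter.atTop (nhds 0) →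
      T y = y)
    (D : ℝ → EReal)
    (hD : ∀ r : ℝ, D r = sInf ((fun u => ((Metric.infDist u {x | T x = x}
        - Metric.infDist (T u) {x | T x = x} : ℝ) : EReal)) ''
        ({u | Metric.infDist u {x | T x = x} ≥ r} ∩ C))) :
    ∀ r : ℝ, 0 ≤ r → (D r = 0 ↔ r = 0) := by
  intro r hr
  set Fix : Set (EuclideanSpace ℝ (Fin n)) := {x | T x = x} with hFixdef
  -- Fix is closed
  have hFixClosed : IsClosed Fix := by
    apply IsSeqClosed.isClosed
    intro x y hx hxy
    refine hclosed x y hxy ?_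
    have : (fun k => ‖T (x k) - x k‖) = fun _ => (0 : ℝ) := by
      funext k
      have : T (x k) = x k := hx k
      simp [this]
    rw [this]
    exact tendsto_const_nhds
  -- quantitative decrease
  have hquant : ∀ u, α * ‖u - T u‖ ^ 2 ≤
      (Metric.infDist u Fix) ^ 2 - (Metric.infDist (T u) Fix) ^ 2 := by
    intro u
    obtain ⟨w, hw, hdw⟩ := hFixClosed.exists_infDist_eq_dist hFix u
    have h1 := hsqne u w hw
    have h2 : Metric.infDist (T u) Fix ≤ ‖T u - w‖ := by
      rw [← dist_eq_norm]; exact Metric.infDist_le_dist_of_mem hw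
    have h3 : Metric.infDist u Fix = ‖u - w‖ := by rw [hdw, dist_eq_norm]
    have h4 : (0 : ℝ) ≤ Metric.infDist (T u) Fix := Metric.infDist_nonneg
    have h5 : (Metric.infDist (T u) Fix) ^ 2 ≤ ‖T u - w‖ ^ 2 :=
      pow_le_pow_left₀ h4 h2 2
    rw [h3]
    linarith
  -- monotonicity
  have hmono : ∀ u, Metric.infDist (T u) Fix ≤ Metric.infDist u Fix := by
    intro u
    have h1 := hquant u
    have h2 : (0 : ℝ) ≤ Metric.infDist (T u) Fix := Metric.infDist_nonneg
    have h3 : (0 : ℝ) ≤ Metric.infDist u Fix := Metric.infDist_nonneg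
    nlinarith [sq_nonneg (‖u - T u‖), mul_nonneg hα.le (sq_nonneg ‖u - T u‖)]
  obtain ⟨w₀, hw₀Fix, hw₀C⟩ := hint
  constructor
  · -- D r = 0 → r = 0
    intro hD0
    by_contra hrne
    have hrpos : 0 < r := lt_of_le_of_ne hr (Ne.symm hrne)
    set S : Set (EuclideanSpace ℝ (Fin n)) :=
      {u | Metric.infDist u Fix ≥ r} ∩ C with hSdef
    have hsinf : sInf ((fun u => ((Metric.infDist u Fix
        - Metric.infDist (T u) Fix : ℝ) : EReal)) '' S) = (0 : EReal) := by
      rw [← hD r]; exact hD0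
    rcases Set.eq_empty_or_nonempty S with hS | hS
    · rw [hS, Set.image_empty, sInf_empty] at hsinf
      exact absurd hsinf (by simp)
    have hCcpt : IsCompact C := Metric.isCompact_of_isClosed_isBounded hC hCbdd
    have hScl : IsClosed {u : EuclideanSpace ℝ (Fin n) | Metric.infDist u Fix ≥ r} :=
      isClosed_le continuous_const (Metric.continuous_infDist_pt Fix)
    have hScpt : IsCompact S := hCcpt.inter_left hScl
    obtain ⟨M, hM⟩ := hCbdd.subset_closedBall w₀
    have hMnn : 0 ≤ M := by
      have := hM hw₀C
      simpa using this
    -- choose an infimizing sequence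
    have hseq : ∀ k : ℕ, ∃ u, u ∈ S ∧
        Metric.infDist u Fix - Metric.infDist (T u) Fix < 1 / (k + 1) := by
      intro k
      have hpos : (0 : EReal) < ((1 / (k + 1) : ℝ) : EReal) := by
        rw [EReal.coe_pos]
        positivity
      have hlt : sInf ((fun u => ((Metric.infDist u Fix
          - Metric.infDist (T u) Fix : ℝ) : EReal)) '' S) < ((1 / (k + 1) : ℝ) : EReal) := by
        rw [hsinf]; exact hpos
      obtain ⟨a, ha, halt⟩ := sInf_lt_iff.mp hlt
      obtain ⟨u, huS, hau⟩ := ha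
      refine ⟨u, huS, ?_⟩
      rw [← hau] at halt
      have halt' : ((Metric.infDist u Fix - Metric.infDist (T u) Fix : ℝ) : EReal)
          < ((1 / (k + 1) : ℝ) : EReal) := halt
      exact_mod_cast halt'
    choose u huS hu using hseq
    have hfnn : ∀ k, 0 ≤ Metric.infDist (u k) Fix - Metric.infDist (T (u k)) Fix :=
      fun k => sub_nonneg.mpr (hmono (u k))
    -- the residuals tend to zero
    have hbound : ∀ k : ℕ, ‖T (u k) - u k‖ ^ 2 ≤ (2 * M / α) * (1 / (k + 1)) := by
      intro k
      have h1 := hquant (u k)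
      have h2 := hu k
      have h3 := hfnn k
      have hdle : Metric.infDist (u k) Fix ≤ M := by
        have hmem : u k ∈ Metric.closedBall w₀ M := hM (huS k).2
        calc Metric.infDist (u k) Fix ≤ dist (u k) w₀ :=
              Metric.infDist_le_dist_of_mem hw₀Fix
          _ ≤ M := Metric.mem_closedBall.mp hmem
      have hd2 := hmono (u k)
      have hd0 : (0 : ℝ) ≤ Metric.infDist (T (u k)) Fix := Metric.infDist_nonneg
      have hnorm : ‖T (u k) - u k‖ = ‖u k - T (u k)‖ := norm_sub_rev _ _
      rw [hnorm]
      have hkpos : (0 : ℝ) < 1 / (k + 1) := by positivity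
      -- α * ‖u - Tu‖^2 ≤ d(u)^2 - d(Tu)^2 ≤ (d(u)+d(Tu)) * f(u) ≤ 2M * (1/(k+1))
      have key : α * ‖u k - T (u k)‖ ^ 2 ≤ 2 * M * (1 / (k + 1)) := by
        nlinarith
      rw [div_mul_eq_mul_div, le_div_iff₀ hα]
      nlinarith [key]
    have hsq0 : Filter.Tendsto (fun k : ℕ => ‖T (u k) - u k‖ ^ 2)
        Filter.atTop (nhds 0) := by
      have hlim : Filter.Tendsto (fun k : ℕ => (2 * M / α) * (1 / (k + 1 : ℝ)))
          Filter.atTop (nhds 0) := by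
        have := tendsto_one_div_add_atTop_nhds_zero_nat.const_mul (2 * M / α)
        simpa using this
      exact squeeze_zero (fun k => sq_nonneg _) hbound hlim
    have hres0 : Filter.Tendsto (fun k : ℕ => ‖T (u k) - u k‖)
        Filter.atTop (nhds 0) := by
      have hsqrt : Filter.Tendsto (fun k : ℕ => Real.sqrt (‖T (u k) - u k‖ ^ 2))
          Filter.atTop (nhds (Real.sqrt 0)) :=
        (Real.continuous_sqrt.tendsto 0).comp hsq0
      simpa [Real.sqrt_sq (norm_nonneg _)] using hsqrt
    obtain ⟨x, hxS, φ, hφ, hconv⟩ := hScpt.tendsto_subseq huS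
    have hres0' : Filter.Tendsto (fun j : ℕ => ‖T ((u ∘ φ) j) - (u ∘ φ) j‖)
        Filter.atTop (nhds 0) := hres0.comp hφ.tendsto_atTop
    have hTx : T x = x := hclosed (u ∘ φ) x hconv hres0'
    have hx0 : Metric.infDist x Fix = 0 := Metric.infDist_zero_of_mem hTx
    have := hxS.1
    rw [Set.mem_setOf_eq, hx0] at this
    linarith
  · -- r = 0 → D 0 = 0
    intro hr0
    subst hr0
    rw [hD 0]
    have hset : {u : EuclideanSpace ℝ (Fin n) | Metric.infDist u Fix ≥ 0} ∩ C = C := by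
      ext v
      simp [Metric.infDist_nonneg]
    rw [hset]
    apply le_antisymm
    · apply sInf_le
      refine ⟨w₀, hw₀C, ?_⟩
      have h1 : Metric.infDist w₀ Fix = 0 := Metric.infDist_zero_of_mem hw₀Fix
      have h2 : T w₀ = w₀ := hw₀Fix
      show ((Metric.infDist w₀ Fix - Metric.infDist (T w₀) Fix : ℝ) : EReal) = 0
      rw [h2, h1]
      simp
    · apply le_sInf
      rintro a ⟨v, hvC, rfl⟩
      show (0 : EReal) ≤ ((Metric.infDist v Fix - Metric.infDist (T v) Fix : ℝ) : EReal)
      exact_mod_cast sub_nonneg.mpr (hmono v)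
end

section
/- Let f : [0,∞) → [0,∞] be an increasing function with f(r) = 0 ⟺ r = 0, and let {b_k} ⊆ [0,∞) with lim_{k→∞} b_k = 0. Then any sequence {a_k} ⊆ [0,∞) satisfying a_{k+1} ≤ a_k − f(a_k) + b_k for all k converges to 0. -/
theorem stmt_10 (f : ℝ → EReal)
    (hf0 : ∀ r : ℝ, 0 ≤ r → 0 ≤ f r)
    (hmono : ∀ r₁ r₂ : ℝ, 0 ≤ r₂ → r₂ ≤ r₁ → f r₂ ≤ f r₁)
    (hfzero : ∀ r : ℝ, 0 ≤ r → (f r = 0 ↔ r = 0))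
    (b : ℕ → ℝ) (hb : ∀ k, 0 ≤ b k)
    (hbto : Filter.Tendsto b Filter.atTop (nhds 0))
    (a : ℕ → ℝ) (ha : ∀ k, 0 ≤ a k)
    (hrec : ∀ k, ((a (k + 1) : ℝ) : EReal) ≤ ((a k : ℝ) : EReal) - f (a k) + ((b k : ℝ) : EReal)) :
    Filter.Tendsto a Filter.atTop (nhds 0) := by
  -- f (a k) is finite
  have hfin : ∀ k, f (a k) ≠ ⊤ := by
    intro k h
    have := hrec k
    rw [h] at this
    simp only [EReal.sub_top] at this
    rw [EReal.bot_add] at this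
    exact absurd this (by simp)
  have hnbot : ∀ k, f (a k) ≠ ⊥ := fun k => ne_of_gt (lt_of_lt_of_le EReal.bot_lt_zero (hf0 _ (ha k)))
  set g : ℕ → ℝ := fun k => (f (a k)).toReal with hg
  have hgeq : ∀ k, f (a k) = ((g k : ℝ) : EReal) := fun k => (EReal.coe_toReal (hfin k) (hnbot k)).symm
  have hg0 : ∀ k, 0 ≤ g k := by
    intro k
    have : (0 : EReal) ≤ ((g k : ℝ) : EReal) := (hgeq k) ▸ hf0 _ (ha k)
    exact_mod_cast this
  have hrec' : ∀ k, a (k + 1) ≤ a k - g k + b k := by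
    intro k
    have := hrec k
    rw [hgeq k, ← EReal.coe_sub, ← EReal.coe_add] at this
    exact_mod_cast this
  have key : ∀ ε : ℝ, 0 < ε → ∃ N, ∀ k ≥ N, a k ≤ ε := by
    intro ε hε
    obtain ⟨c, hc0, hcle⟩ : ∃ c : ℝ, 0 < c ∧ (c : EReal) ≤ f (ε / 2) := by
      have hne : f (ε / 2) ≠ 0 := by
        intro h
        exact absurd ((hfzero _ (le_of_lt (half_pos hε))).mp h) (ne_of_gt (half_pos hε))
      have hpos : (0 : EReal) < f (ε / 2) :=
        lt_of_le_of_ne (hf0 _ (le_of_lt (half_pos hε))) (Ne.symm hne)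
      rcases eq_or_ne (f (ε / 2)) ⊤ with h | h
      · exact ⟨1, one_pos, by simp [h]⟩
      · have hnb : f (ε / 2) ≠ ⊥ := ne_of_gt (lt_of_le_of_lt EReal.bot_lt_zero.le hpos)
        have hco : f (ε / 2) = (((f (ε / 2)).toReal : ℝ) : EReal) := (EReal.coe_toReal h hnb).symm
        refine ⟨(f (ε / 2)).toReal, ?_, le_of_eq hco.symm⟩
        rw [hco] at hpos
        exact_mod_cast hpos
    have hgc : ∀ k, ε / 2 ≤ a k → c ≤ g k := by
      intro k hk
      have h1 : (c : EReal) ≤ f (a k) :=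
        le_trans hcle (hmono _ _ (le_of_lt (half_pos hε)) hk)
      rw [hgeq k] at h1
      exact_mod_cast h1
    obtain ⟨N, hN⟩ := Metric.tendsto_atTop.mp hbto (min (c / 2) (ε / 2)) (by positivity)
    have hbsmall : ∀ k ≥ N, b k ≤ c / 2 ∧ b k ≤ ε / 2 := by
      intro k hk
      have := hN k hk
      rw [Real.dist_eq, sub_zero, abs_of_nonneg (hb k)] at this
      constructor
      · linarith [min_le_left (c / 2) (ε / 2)]
      · linarith [min_le_right (c / 2) (ε / 2)]
    -- there is some k₀ ≥ N with a k₀ < ε / 2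
    have hex : ∃ k₀ ≥ N, a k₀ < ε / 2 := by
      by_contra h
      push_neg at h
      have hdec : ∀ m : ℕ, a (N + m) ≤ a N - m * (c / 2) := by
        intro m
        induction m with
        | zero => simp
        | succ n ih =>
          have hge : ε / 2 ≤ a (N + n) := h _ (Nat.le_add_right N n)
          have hc2 : c ≤ g (N + n) := hgc _ hge
          have hb2 := (hbsmall (N + n) (Nat.le_add_right N n)).1
          have := hrec' (N + n)
          have : a (N + n + 1) ≤ a (N + n) - c / 2 := by linarith
          push_cast
          calc a (N + (n + 1)) = a (N + n + 1) := by ring_nf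
            _ ≤ a (N + n) - c / 2 := this
            _ ≤ a N - n * (c / 2) - c / 2 := by linarith
            _ = a N - (n + 1) * (c / 2) := by ring
      obtain ⟨m, hm⟩ := exists_nat_gt (a N / (c / 2))
      have hm' : a N < m * (c / 2) := by
        rw [div_lt_iff₀ (by positivity)] at hm
        linarith
      have := hdec m
      have := ha (N + m)
      linarith
    obtain ⟨k₀, hk₀N, hk₀⟩ := hex
    refine ⟨k₀, ?_⟩
    intro k hk
    induction k, hk using Nat.le_induction with
    | base => linarith
    | succ n hn ih =>
      have hnN : N ≤ n := le_trans hk₀N hn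
      rcases lt_or_ge (a n) (ε / 2) with h | h
      · have := hrec' n
        have := (hbsmall n hnN).2
        have := hg0 n
        linarith
      · have hc2 : c ≤ g n := hgc _ h
        have := hrec' n
        have := (hbsmall n hnN).1
        linarith
  rw [Metric.tendsto_atTop]
  intro ε hε
  obtain ⟨N, hN⟩ := key (ε / 2) (half_pos hε)
  refine ⟨N, fun k hk => ?_⟩
  rw [Real.dist_eq, sub_zero, abs_of_nonneg (ha k)]
  linarith [hN k hk]
end

section
/- Let f : ℝⁿ → ℝ be convex with f_{≤0} ≠ ∅, and define the subgradient projection Π(y) := y − (f(y)/‖g_f(y)‖²) g_f(y) if f(y) > 0, and Π(y) := y if f(y) ≤ 0, where g_f(y) is a chosen subgradient of f at y. Then Π(y) equals the metric projection of y onto the set L := {x : f(y) + ⟨g_f(y), x − y⟩ ≤ 0} whenever f(y) > 0, Π is a cutter, and Fix(Π) = f_{≤0}. -/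
open scoped RealInnerProductSpace

theorem stmt_12 (n : ℕ) (f : EuclideanSpace ℝ (Fin n) → ℝ)
    (hconv : ConvexOn ℝ Set.univ f)
    (hlev : {x | f x ≤ 0}.Nonempty)
    (g : EuclideanSpace ℝ (Fin n) → EuclideanSpace ℝ (Fin n))
    (hg : ∀ y x, f x ≥ f y + ⟪g y, x - y⟫)
    (Pi : EuclideanSpace ℝ (Fin n) → EuclideanSpace ℝ (Fin n))
    (hPi : ∀ y, Pi y = if 0 < f y then y - (f y / ‖g y‖ ^ 2) • g y else y) :
    (∀ y, 0 < f y →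
      (Pi y ∈ {x | f y + ⟪g y, x - y⟫ ≤ 0} ∧
        ∀ z ∈ {x | f y + ⟪g y, x - y⟫ ≤ 0}, dist y (Pi y) ≤ dist y z)) ∧
    (∀ x : EuclideanSpace ℝ (Fin n), ∀ w ∈ {x | Pi x = x}, ⟪Pi x - x, Pi x - w⟫ ≤ 0) ∧
    {x | Pi x = x} = {x | f x ≤ 0} := by
  -- g y ≠ 0 when f y > 0
  have hgne : ∀ y, 0 < f y → g y ≠ 0 := by
    intro y hy hgy
    obtain ⟨x0, hx0⟩ := hlev
    have := hg y x0
    rw [hgy, inner_zero_left] at this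
    simp at this
    linarith [Set.mem_setOf_eq ▸ hx0]
  have hgnorm : ∀ y, 0 < f y → (0:ℝ) < ‖g y‖ ^ 2 := by
    intro y hy
    have h := norm_pos_iff.mpr (hgne y hy)
    positivity
  -- fixed points = sublevel set
  have hfix : {x | Pi x = x} = {x | f x ≤ 0} := by
    ext x
    simp only [Set.mem_setOf_eq]
    constructor
    · intro hx
      by_contra h
      push_neg at h
      have hx' := hPi x
      rw [if_pos h, hx] at hx'
      have : (f x / ‖g x‖ ^ 2) • g x = 0 := by
        have := sub_eq_self.mp hx'.symm
        simpa using this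
      rcases smul_eq_zero.mp this with hc | hgz
      · have := hgnorm x h
        have : f x = 0 := by
          field_simp at hc
          exact (div_eq_zero_iff.mp hc).resolve_right this.ne'
        linarith
      · exact hgne x h hgz
    · intro hx
      rw [hPi x, if_neg (by linarith)]
  refine ⟨?_, ?_, hfix⟩
  · intro y hy
    have hg2 := hgnorm y hy
    have hPiy : Pi y = y - (f y / ‖g y‖ ^ 2) • g y := by rw [hPi y, if_pos hy]
    constructor
    · simp only [Set.mem_setOf_eq, hPiy]
      have : (y - (f y / ‖g y‖ ^ 2) • g y) - y = -((f y / ‖g y‖ ^ 2) • g y) := by abel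
      rw [this, inner_neg_right, inner_smul_right, real_inner_self_eq_norm_sq]
      field_simp
      simp [div_self (norm_pos_iff.mpr (hgne y hy)).ne']
    · intro z hz
      simp only [Set.mem_setOf_eq] at hz
      have h1 : dist y (Pi y) = f y / ‖g y‖ := by
        rw [hPiy, dist_eq_norm]
        have : y - (y - (f y / ‖g y‖ ^ 2) • g y) = (f y / ‖g y‖ ^ 2) • g y := by abel
        rw [this, norm_smul]
        have hgn : (0:ℝ) < ‖g y‖ := norm_pos_iff.mpr (hgne y hy)
        rw [Real.norm_eq_abs, abs_of_pos (by positivity)]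
        field_simp
      have h2 : f y ≤ ⟪g y, y - z⟫ := by
        have : ⟪g y, z - y⟫ ≤ -f y := by linarith
        have h' : ⟪g y, y - z⟫ = -⟪g y, z - y⟫ := by
          rw [← inner_neg_right]; congr 1; abel
        linarith [h'.ge, h'.le]
      have h3 : ⟪g y, y - z⟫ ≤ ‖g y‖ * ‖y - z‖ := real_inner_le_norm _ _
      rw [h1, dist_eq_norm]
      have hgn : (0:ℝ) < ‖g y‖ := norm_pos_iff.mpr (hgne y hy)
      rw [div_le_iff₀ hgn]
      nlinarith
  · intro x w hw
    simp only [Set.mem_setOf_eq] at hw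
    have hwle : f w ≤ 0 := by
      have : w ∈ {x | f x ≤ 0} := hfix ▸ hw
      exact this
    by_cases hx : 0 < f x
    · have hg2 := hgnorm x hx
      have hPix : Pi x = x - (f x / ‖g x‖ ^ 2) • g x := by rw [hPi x, if_pos hx]
      set c : ℝ := f x / ‖g x‖ ^ 2 with hc
      have hcpos : 0 < c := by positivity
      have hd : Pi x - x = -(c • g x) := by rw [hPix]; abel
      have key : 0 ≤ ⟪g x, Pi x - w⟫ := by
        have e1 : ⟪g x, Pi x - w⟫ = ⟪g x, Pi x - x⟫ + ⟪g x, x - w⟫ := by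
          rw [← inner_add_right]; congr 1; abel
        have e2 : ⟪g x, Pi x - x⟫ = -f x := by
          rw [hd, inner_neg_right, inner_smul_right, real_inner_self_eq_norm_sq, hc]
          field_simp
          rw [div_self (norm_pos_iff.mpr (hgne x hx)).ne']
        have e3 : f x - f w ≤ ⟪g x, x - w⟫ := by
          have := hg x w
          have h' : ⟪g x, x - w⟫ = -⟪g x, w - x⟫ := by
            rw [← inner_neg_right]; congr 1; abel
          linarith [h'.ge]
        rw [e1, e2]
        linarith
      rw [hd, inner_neg_left, inner_smul_left]
      simp only [RCLike.star_def, conj_trivial]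
      nlinarith
    · rw [hPi x, if_neg hx]
      simp
end

section
/- Let f : ℝⁿ → ℝ be convex with f_{≤0} ≠ ∅ and let Π be the subgradient projection relative to f (defined in context). Then I − Π is closed at 0: if xᵏ → x and ‖Π(xᵏ) − xᵏ‖ → 0, then f(x) ≤ 0, i.e., x ∈ Fix(Π). -/
open scoped RealInnerProductSpace

theorem stmt_13 (n : ℕ) (f : EuclideanSpace ℝ (Fin n) → ℝ)
    (hconv : ConvexOn ℝ Set.univ f)
    (hlev : {x | f x ≤ 0}.Nonempty)
    (g : EuclideanSpace ℝ (Fin n) → EuclideanSpace ℝ (Fin n))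
    (hg : ∀ y x, f x ≥ f y + ⟪g y, x - y⟫)
    (Pi : EuclideanSpace ℝ (Fin n) → EuclideanSpace ℝ (Fin n))
    (hPi : ∀ y, Pi y = if 0 < f y then y - (f y / ‖g y‖ ^ 2) • g y else y)
    (x : ℕ → EuclideanSpace ℝ (Fin n)) (x₀ : EuclideanSpace ℝ (Fin n))
    (hx : Filter.Tendsto x Filter.atTop (nhds x₀))
    (hPix : Filter.Tendsto (fun k => ‖Pi (x k) - x k‖) Filter.atTop (nhds 0)) :
    f x₀ ≤ 0 := by
  by_contra h
  push_neg at h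
  obtain ⟨z, hz⟩ := hlev
  have hcont : Continuous f := by
    have := hconv.continuousOn isOpen_univ
    rwa [continuousOn_univ] at this
  have hfx : Filter.Tendsto (fun k => f (x k)) Filter.atTop (nhds (f x₀)) :=
    (hcont.tendsto x₀).comp hx
  obtain ⟨y0, -, hM'⟩ := (isCompact_closedBall x₀ 2).exists_isMaxOn
    ⟨x₀, Metric.mem_closedBall_self (by norm_num)⟩ hcont.continuousOn
  have hM : ∀ y ∈ Metric.closedBall x₀ 2, f y ≤ f y0 := fun y hy => hM' hy
  set M := f y0 with hM0
  -- eventually x k is close and f (x k) > f x₀ / 2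
  have h1 : ∀ᶠ k in Filter.atTop, dist (x k) x₀ < 1 :=
    (Metric.tendsto_nhds.1 hx) 1 one_pos
  have h2 : ∀ᶠ k in Filter.atTop, f x₀ / 2 < f (x k) :=
    hfx.eventually (eventually_gt_nhds (by linarith))
  have hMpos : (0:ℝ) < M :=
    lt_of_lt_of_le h (hM x₀ (Metric.mem_closedBall_self (by norm_num)))
  have key : ∀ k, dist (x k) x₀ < 1 → f x₀ / 2 < f (x k) →
      f x₀ / 2 / M ≤ ‖Pi (x k) - x k‖ := by
    intro k hd hf2
    set y := x k with hy
    have hfy : 0 < f y := by linarith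
    have hgy : g y ≠ 0 := by
      intro h0
      have := hg y z
      rw [h0] at this
      simp at this
      have : f z ≤ 0 := hz
      linarith
    have hgn : (0:ℝ) < ‖g y‖ := norm_pos_iff.2 hgy
    -- bound ‖g y‖ ≤ M
    have hub : ‖g y‖ ≤ M := by
      have hmem : y + ‖g y‖⁻¹ • g y ∈ Metric.closedBall x₀ 2 := by
        rw [Metric.mem_closedBall]
        calc dist (y + ‖g y‖⁻¹ • g y) x₀ ≤ dist (y + ‖g y‖⁻¹ • g y) y + dist y x₀ :=
            dist_triangle _ _ _
          _ ≤ 1 + 1 := by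
            refine add_le_add ?_ hd.le
            rw [dist_eq_norm, add_sub_cancel_left, norm_smul, norm_inv, norm_norm]
            rw [inv_mul_cancel₀ hgn.ne']
          _ = 2 := by norm_num
      have hineq := hg y (y + ‖g y‖⁻¹ • g y)
      rw [add_sub_cancel_left, real_inner_smul_right, real_inner_self_eq_norm_sq] at hineq
      have heq : ‖g y‖⁻¹ * ‖g y‖ ^ 2 = ‖g y‖ := by field_simp
      rw [heq] at hineq
      have := hM _ hmem
      linarith
    have hnorm : ‖Pi y - y‖ = f y / ‖g y‖ := by
      rw [hPi y, if_pos hfy, sub_sub_cancel_left, norm_neg, norm_smul, Real.norm_eq_abs,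
        abs_of_pos (div_pos hfy (pow_pos hgn 2))]
      field_simp
    rw [hnorm]
    exact div_le_div₀ (le_of_lt hfy) (by linarith) hgn hub
  -- contradiction
  have hε : (0:ℝ) < f x₀ / 2 / M := div_pos (by linarith) hMpos
  have h3 : ∀ᶠ k in Filter.atTop, ‖Pi (x k) - x k‖ < f x₀ / 2 / M :=
    hPix.eventually (eventually_lt_nhds hε)
  obtain ⟨k, ⟨hk1, hk2⟩, hk3⟩ := ((h1.and h2).and h3).exists
  exact absurd (key k hk1 hk2) (not_le.2 hk3)
end

section
/- Let G be an n×n positive definite symmetric matrix with eigenvalues in [λ₁, λ₂], 0 < λ₁ ≤ λ₂, let a ∈ ℝⁿ, c ∈ (0, λ₁/λ₂), and set r := λ₂(1+c)‖a‖/(λ₁ − λ₂c). Then for all x with ‖x‖ > r and F(x) := G(x − a) ≠ 0, we have ⟨F(x), x⟩ ≥ c‖F(x)‖·‖x‖. -/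
open scoped RealInnerProductSpace

theorem stmt_15 (n : ℕ)
    (G : EuclideanSpace ℝ (Fin n) →ₗ[ℝ] EuclideanSpace ℝ (Fin n))
    (hsym : ∀ x y : EuclideanSpace ℝ (Fin n), ⟪G x, y⟫ = ⟪x, G y⟫)
    (lam₁ lam₂ : ℝ) (hlam₁ : 0 < lam₁) (hlam : lam₁ ≤ lam₂)
    (hlow : ∀ x : EuclideanSpace ℝ (Fin n), lam₁ * ‖x‖ ^ 2 ≤ ⟪G x, x⟫)
    (hupp : ∀ x : EuclideanSpace ℝ (Fin n), ‖G x‖ ≤ lam₂ * ‖x‖)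
    (a : EuclideanSpace ℝ (Fin n)) (c : ℝ) (hc : c ∈ Set.Ioo 0 (lam₁ / lam₂)) :
    ∀ x : EuclideanSpace ℝ (Fin n),
      lam₂ * (1 + c) * ‖a‖ / (lam₁ - lam₂ * c) < ‖x‖ →
      G (x - a) ≠ 0 →
      ⟪G (x - a), x⟫ ≥ c * ‖G (x - a)‖ * ‖x‖ := by
  intro x hx hne
  obtain ⟨hc0, hcu⟩ := hc
  have hlam₂ : 0 < lam₂ := lt_of_lt_of_le hlam₁ hlam
  have hd : 0 < lam₁ - lam₂ * c := by
    have := (lt_div_iff₀ hlam₂).mp hcu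
    nlinarith
  have hx' : lam₂ * (1 + c) * ‖a‖ < (lam₁ - lam₂ * c) * ‖x‖ := by
    rw [div_lt_iff₀ hd] at hx
    linarith [hx]
  -- expand inner product
  have hexp : ⟪G (x - a), x⟫ = ⟪G x, x⟫ - ⟪G a, x⟫ := by
    rw [map_sub, inner_sub_left]
  have h1 : lam₁ * ‖x‖ ^ 2 ≤ ⟪G x, x⟫ := hlow x
  have h2 : |⟪G a, x⟫| ≤ ‖G a‖ * ‖x‖ := abs_real_inner_le_norm _ _
  have h3 : ‖G a‖ ≤ lam₂ * ‖a‖ := hupp a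
  have h4 : ‖G (x - a)‖ ≤ lam₂ * (‖x‖ + ‖a‖) := by
    refine (hupp (x - a)).trans ?_
    have := norm_sub_le x a
    nlinarith
  have hxn : (0 : ℝ) ≤ ‖x‖ := norm_nonneg x
  have han : (0 : ℝ) ≤ ‖a‖ := norm_nonneg a
  have h2' : ⟪G a, x⟫ ≤ lam₂ * ‖a‖ * ‖x‖ := by
    have := (abs_le.mp h2).2
    nlinarith
  rw [hexp]
  have hF : c * ‖G (x - a)‖ * ‖x‖ ≤ c * (lam₂ * (‖x‖ + ‖a‖)) * ‖x‖ := by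
    exact mul_le_mul_of_nonneg_right (mul_le_mul_of_nonneg_left h4 hc0.le) hxn
  nlinarith [sq_nonneg ‖x‖, sq_nonneg (‖x‖ - ‖a‖)]
end

section
/- Let T : ℝⁿ → ℝⁿ be a cutter, x ∈ ℝⁿ with x ≠ T(x), H := {u : ⟨u − T(x), x − T(x)⟩ ≤ 0}, α ∈ (0,2), and P_α := I + α(P_H − I). Then for every y ∈ ℝⁿ and every w ∈ Fix(T): ‖P_α(y) − w‖² ≤ ‖y − w‖² − ((2−α)/α)‖P_α(y) − y‖². Consequently, dist(P_α(y), Fix(T))² ≤ dist(y, Fix(T))² − ((2−α)/α)‖P_α(y) − y‖². -/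
open scoped RealInnerProductSpace

theorem stmt_16 (n : ℕ) (T : EuclideanSpace ℝ (Fin n) → EuclideanSpace ℝ (Fin n))
    (hFix : {x | T x = x}.Nonempty)
    (hcut : ∀ x : EuclideanSpace ℝ (Fin n), ∀ w ∈ {x | T x = x},
      ⟪T x - x, T x - w⟫ ≤ 0)
    (x : EuclideanSpace ℝ (Fin n)) (hx : x ≠ T x)
    (α : ℝ) (hα : α ∈ Set.Ioo (0 : ℝ) 2)
    (PH : EuclideanSpace ℝ (Fin n) → EuclideanSpace ℝ (Fin n))
    (hPH : ∀ y, PH y ∈ {u | ⟪u - T x, x - T x⟫ ≤ 0} ∧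
      ∀ u ∈ {u | ⟪u - T x, x - T x⟫ ≤ 0}, ⟪y - PH y, u - PH y⟫ ≤ 0)
    (Pα : EuclideanSpace ℝ (Fin n) → EuclideanSpace ℝ (Fin n))
    (hPα : ∀ y, Pα y = y + α • (PH y - y)) :
    (∀ y : EuclideanSpace ℝ (Fin n), ∀ w ∈ {x | T x = x},
      ‖Pα y - w‖ ^ 2 ≤ ‖y - w‖ ^ 2 - ((2 - α) / α) * ‖Pα y - y‖ ^ 2) ∧
    (∀ y : EuclideanSpace ℝ (Fin n),
      Metric.infDist (Pα y) {x | T x = x} ^ 2 ≤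
        Metric.infDist y {x | T x = x} ^ 2 - ((2 - α) / α) * ‖Pα y - y‖ ^ 2) := by
  obtain ⟨hα0, hα2⟩ := hα
  -- Fix(T) ⊆ H
  have hFixH : ∀ w ∈ {x | T x = x}, w ∈ {u | ⟪u - T x, x - T x⟫ ≤ 0} := by
    intro w hw
    have h := hcut x w hw
    have heq : ⟪T x - x, T x - w⟫ = ⟪w - T x, x - T x⟫ := by
      simp only [inner_sub_left, inner_sub_right]
      linear_combination real_inner_comm w x - real_inner_comm w (T x) - real_inner_comm (T x) x
    rw [heq] at h
    exact h
  have part1 : ∀ y : EuclideanSpace ℝ (Fin n), ∀ w ∈ {x | T x = x},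
      ‖Pα y - w‖ ^ 2 ≤ ‖y - w‖ ^ 2 - ((2 - α) / α) * ‖Pα y - y‖ ^ 2 := by
    intro y w hw
    set p := PH y with hp
    have hobtuse : ⟪y - p, w - p⟫ ≤ 0 := (hPH y).2 w (hFixH w hw)
    have hkey : ⟪y - w, p - y⟫ = ⟪y - p, w - p⟫ - ‖y - p‖ ^ 2 := by
      simp only [← real_inner_self_eq_norm_sq, inner_sub_left, inner_sub_right]
      linear_combination real_inner_comm p y + real_inner_comm w p +
        real_inner_comm y w
    have hPαy : Pα y - w = (y - w) + α • (p - y) := by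
      rw [hPα y]; abel
    have hPαy' : Pα y - y = α • (p - y) := by
      rw [hPα y]; abel
    have hnorm1 : ‖Pα y - w‖ ^ 2
        = ‖y - w‖ ^ 2 + 2 * (α * ⟪y - w, p - y⟫) + α ^ 2 * ‖p - y‖ ^ 2 := by
      rw [hPαy]
      simp only [← real_inner_self_eq_norm_sq, inner_add_left, inner_add_right,
        real_inner_smul_left, real_inner_smul_right]
      linear_combination (α : ℝ) * real_inner_comm (y - w) (p - y)
    have hnorm2 : ‖Pα y - y‖ ^ 2 = α ^ 2 * ‖p - y‖ ^ 2 := by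
      rw [hPαy', norm_smul]
      rw [mul_pow, Real.norm_eq_abs, sq_abs]
    have hpy : ‖p - y‖ = ‖y - p‖ := norm_sub_rev _ _
    rw [hnorm1, hnorm2]
    have hdiv : (2 - α) / α * (α ^ 2 * ‖p - y‖ ^ 2) = (2 - α) * α * ‖p - y‖ ^ 2 := by
      field_simp
    rw [hdiv]
    have h1 : ⟪y - w, p - y⟫ ≤ -‖p - y‖ ^ 2 := by
      rw [hkey, hpy]; linarith
    nlinarith [sq_nonneg ‖p - y‖, hα0]
  refine ⟨part1, ?_⟩
  intro y
  set S := {x | T x = x} with hS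
  set c := ((2 - α) / α) * ‖Pα y - y‖ ^ 2 with hc
  have hc0 : 0 ≤ c := by
    apply mul_nonneg (div_nonneg (by linarith) (le_of_lt hα0)) (sq_nonneg _)
  have h1 : ∀ w ∈ S, Metric.infDist (Pα y) S ^ 2 + c ≤ dist y w ^ 2 := by
    intro w hw
    have h2 : Metric.infDist (Pα y) S ≤ dist (Pα y) w := Metric.infDist_le_dist_of_mem hw
    have h3 : Metric.infDist (Pα y) S ^ 2 ≤ dist (Pα y) w ^ 2 :=
      pow_le_pow_left₀ Metric.infDist_nonneg h2 2
    have h4 := part1 y w hw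
    rw [dist_eq_norm] at h3
    rw [dist_eq_norm]
    linarith
  set r := Real.sqrt (Metric.infDist (Pα y) S ^ 2 + c) with hr
  have hrle : r ≤ Metric.infDist y S := by
    by_contra hcon
    push_neg at hcon
    obtain ⟨w, hw, hdw⟩ := (Metric.infDist_lt_iff hFix).1 hcon
    have hle : r ≤ dist y w := by
      calc r ≤ Real.sqrt (dist y w ^ 2) := Real.sqrt_le_sqrt (h1 w hw)
        _ = dist y w := by rw [Real.sqrt_sq dist_nonneg]
    linarith
  have hr2 : r ^ 2 = Metric.infDist (Pα y) S ^ 2 + c := by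
    rw [hr, Real.sq_sqrt]
    positivity
  have hfin := pow_le_pow_left₀ (Real.sqrt_nonneg _) hrle 2
  rw [hr2] at hfin
  linarith
end

section
/- Let T : ℝⁿ → ℝⁿ be a cutter, and consider the algorithm x^{k+1} = P_{α_k}(z^k), where H_k := H(x^k, T(x^k)), z^k := x^k − ρ_k F(x^k)/‖F(x^k)‖ if F(x^k) ≠ 0 and z^k := x^k otherwise, P_{α_k} := I + α_k(P_{H_k} − I), α_k ∈ [μ, 2−μ] for some μ ∈ (0,1), and ρ_k > 0 with ρ_k → 0 and Σρ_k = ∞. Assume there exist q ∈ Fix(T), β > 0 and a bounded set E ⊆ ℝⁿ with ⟨F(x), x − q⟩ ≥ β‖F(x)‖ for all x ∉ E. Then any sequence {x^k} generated by the algorithm is bounded. -/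
open Classical
open scoped RealInnerProductSpace

theorem stmt_17 (n : ℕ) (T F : EuclideanSpace ℝ (Fin n) → EuclideanSpace ℝ (Fin n))
    (hFix : {x | T x = x}.Nonempty)
    (hcut : ∀ x : EuclideanSpace ℝ (Fin n), ∀ w ∈ {x | T x = x},
      ⟪T x - x, T x - w⟫ ≤ 0)
    (μ : ℝ) (hμ : μ ∈ Set.Ioo (0 : ℝ) 1)
    (α : ℕ → ℝ) (hα : ∀ k, α k ∈ Set.Icc μ (2 - μ))
    (ρ : ℕ → ℝ) (hρpos : ∀ k, 0 < ρ k)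
    (hρ0 : Filter.Tendsto ρ Filter.atTop (nhds 0))
    (hρsum : ¬ Summable ρ)
    (q : EuclideanSpace ℝ (Fin n)) (hq : T q = q) (β : ℝ) (hβ : 0 < β)
    (E : Set (EuclideanSpace ℝ (Fin n))) (hE : Bornology.IsBounded E)
    (hcoerc : ∀ x ∉ E, ⟪F x, x - q⟫ ≥ β * ‖F x‖)
    (x z : ℕ → EuclideanSpace ℝ (Fin n))
    (P : ℕ → EuclideanSpace ℝ (Fin n) → EuclideanSpace ℝ (Fin n))
    (hP : ∀ k y, P k y ∈ {u | ⟪u - T (x k), x k - T (x k)⟫ ≤ 0} ∧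
      ∀ u ∈ {u | ⟪u - T (x k), x k - T (x k)⟫ ≤ 0}, ⟪y - P k y, u - P k y⟫ ≤ 0)
    (hz : ∀ k, z k = if F (x k) ≠ 0 then x k - (ρ k / ‖F (x k)‖) • F (x k) else x k)
    (hiter : ∀ k, x (k + 1) = z k + α k • (P k (z k) - z k)) :
    ∃ M : ℝ, ∀ k, ‖x k‖ ≤ M := by
  classical
  obtain ⟨hμ0, hμ1⟩ := hμ
  -- q belongs to every halfspace H_k
  have hqH : ∀ k, ⟪q - T (x k), x k - T (x k)⟫ ≤ 0 := by
    intro k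
    have h := hcut (x k) q hq
    have heq : ⟪q - T (x k), x k - T (x k)⟫ = ⟪T (x k) - x k, T (x k) - q⟫ := by
      rw [← neg_sub (T (x k)) q, ← neg_sub (T (x k)) (x k), inner_neg_neg, real_inner_comm]
    rw [heq]; exact h
  -- Fejér monotonicity of the relaxed projection step
  have fejer : ∀ k, ‖x (k + 1) - q‖ ≤ ‖z k - q‖ := by
    intro k
    set y := z k with hy
    set p := P k y with hp
    have hproj : ⟪y - p, q - p⟫ ≤ 0 := (hP k y).2 q (hqH k)
    have hxk : x (k + 1) - q = (y - q) + α k • (p - y) := by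
      rw [hiter k]; abel
    have hsq : ‖x (k + 1) - q‖ ^ 2
        = ‖y - q‖ ^ 2 + 2 * (α k * ⟪y - q, p - y⟫) + (α k) ^ 2 * ‖p - y‖ ^ 2 := by
      rw [hxk, norm_add_sq_real, real_inner_smul_right, norm_smul, Real.norm_eq_abs,
        mul_pow, sq_abs]
    have h2 : ⟪y - p, p - y⟫ = -‖y - p‖ ^ 2 := by
      rw [← neg_sub y p, inner_neg_right, real_inner_self_eq_norm_sq]
    have h3 : ⟪p - q, p - y⟫ = ⟪y - p, q - p⟫ := by
      rw [← neg_sub q p, ← neg_sub y p, inner_neg_neg, real_inner_comm]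
    have key : ⟪y - q, p - y⟫ ≤ -‖y - p‖ ^ 2 := by
      have hd : y - q = (y - p) + (p - q) := by abel
      calc ⟪y - q, p - y⟫ = ⟪y - p, p - y⟫ + ⟪p - q, p - y⟫ := by rw [hd, inner_add_left]
        _ = -‖y - p‖ ^ 2 + ⟪y - p, q - p⟫ := by rw [h2, h3]
        _ ≤ -‖y - p‖ ^ 2 := by linarith
    have hαk := hα k
    have hα0 : 0 < α k := lt_of_lt_of_le hμ0 hαk.1
    have hα2 : α k < 2 := lt_of_le_of_lt hαk.2 (by linarith)
    have hnorm_rev : ‖p - y‖ = ‖y - p‖ := norm_sub_rev _ _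
    have hsq' : ‖x (k + 1) - q‖ ^ 2 ≤ ‖y - q‖ ^ 2 := by
      rw [hsq, hnorm_rev]
      nlinarith [mul_le_mul_of_nonneg_left key hα0.le,
        mul_nonneg (mul_nonneg hα0.le (by linarith : (0:ℝ) ≤ 2 - α k)) (sq_nonneg ‖y - p‖)]
    have := Real.sqrt_le_sqrt hsq'
    rwa [Real.sqrt_sq (norm_nonneg _), Real.sqrt_sq (norm_nonneg _)] at this
  -- bound on E
  obtain ⟨C, hC⟩ : ∃ C, ∀ e ∈ E, ‖e - q‖ ≤ C := by
    obtain ⟨r, hr⟩ := hE.subset_closedBall q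
    exact ⟨r, fun e he => by simpa [dist_eq_norm] using hr he⟩
  -- key step bound on z
  have hzb : ∀ k, ρ k ≤ β → ‖z k - q‖ ≤ max (‖x k - q‖) (C + β) := by
    intro k hρβ
    by_cases hF : F (x k) = 0
    · have : z k = x k := by rw [hz k]; simp [hF]
      rw [this]; exact le_max_left _ _
    · have hzk : z k = x k - (ρ k / ‖F (x k)‖) • F (x k) := by rw [hz k]; simp [hF]
      have hFn : (0 : ℝ) < ‖F (x k)‖ := norm_pos_iff.mpr hF
      have hcnn : (0 : ℝ) ≤ ρ k / ‖F (x k)‖ := div_nonneg (hρpos k).le hFn.le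
      have hcF : (ρ k / ‖F (x k)‖) * ‖F (x k)‖ = ρ k := div_mul_cancel₀ _ hFn.ne'
      by_cases hxE : x k ∈ E
      · have h1 : ‖z k - q‖ ≤ ‖x k - q‖ + ‖(ρ k / ‖F (x k)‖) • F (x k)‖ := by
          rw [hzk, sub_right_comm]
          exact norm_sub_le _ _
        have h2 : ‖(ρ k / ‖F (x k)‖) • F (x k)‖ = ρ k := by
          rw [norm_smul, Real.norm_eq_abs, abs_of_nonneg hcnn, hcF]
        rw [h2] at h1
        have h3 := hC _ hxE
        have h4 : ‖z k - q‖ ≤ C + β := by linarith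
        exact le_trans h4 (le_max_right _ _)
      · have hco := hcoerc (x k) hxE
        have hsq : ‖z k - q‖ ^ 2
            = ‖x k - q‖ ^ 2 - 2 * ((ρ k / ‖F (x k)‖) * ⟪x k - q, F (x k)⟫)
              + ((ρ k / ‖F (x k)‖) * ‖F (x k)‖) ^ 2 := by
          rw [hzk, sub_right_comm, norm_sub_sq_real, real_inner_smul_right, norm_smul,
            Real.norm_eq_abs, mul_pow, sq_abs, mul_pow]
        have hip : ⟪x k - q, F (x k)⟫ = ⟪F (x k), x k - q⟫ := real_inner_comm _ _
        have hlow : (ρ k / ‖F (x k)‖) * ⟪x k - q, F (x k)⟫ ≥ ρ k * β := by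
          rw [hip]
          calc (ρ k / ‖F (x k)‖) * ⟪F (x k), x k - q⟫
              ≥ (ρ k / ‖F (x k)‖) * (β * ‖F (x k)‖) := by
                exact mul_le_mul_of_nonneg_left hco hcnn
            _ = ρ k * β := by field_simp
        have hsq' : ‖z k - q‖ ^ 2 ≤ ‖x k - q‖ ^ 2 := by
          rw [hsq, hcF]
          nlinarith [hρpos k]
        have := Real.sqrt_le_sqrt hsq'
        rw [Real.sqrt_sq (norm_nonneg _), Real.sqrt_sq (norm_nonneg _)] at this
        exact le_trans this (le_max_left _ _)
  -- eventually ρ k ≤ β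
  obtain ⟨K, hK⟩ : ∃ K, ∀ k ≥ K, ρ k ≤ β := by
    have h := hρ0.eventually (eventually_lt_nhds hβ)
    obtain ⟨K, hK⟩ := Filter.eventually_atTop.mp h
    exact ⟨K, fun k hk => (hK k hk).le⟩
  set B : ℝ := max (‖x K - q‖) (C + β) with hB
  have hind : ∀ k, K ≤ k → ‖x k - q‖ ≤ B := by
    intro k hk
    induction k, hk using Nat.le_induction with
    | base => exact le_max_left _ _
    | succ k hk ih =>
      calc ‖x (k + 1) - q‖ ≤ ‖z k - q‖ := fejer k
        _ ≤ max (‖x k - q‖) (C + β) := hzb k (hK k hk)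
        _ ≤ B := max_le ih (le_max_right _ _)
  have hB0 : 0 ≤ B := le_trans (norm_nonneg _) (le_max_left _ _)
  refine ⟨(∑ i ∈ Finset.range K, ‖x i‖) + B + ‖q‖, fun k => ?_⟩
  have hsum0 : 0 ≤ ∑ i ∈ Finset.range K, ‖x i‖ :=
    Finset.sum_nonneg fun i _ => norm_nonneg _
  by_cases hk : K ≤ k
  · have h1 : ‖x k‖ ≤ ‖x k - q‖ + ‖q‖ := by
      calc ‖x k‖ = ‖(x k - q) + q‖ := by rw [sub_add_cancel]
        _ ≤ ‖x k - q‖ + ‖q‖ := norm_add_le _ _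
    have := hind k hk
    linarith
  · have hkK : k ∈ Finset.range K := Finset.mem_range.mpr (not_le.mp hk)
    have := Finset.single_le_sum (f := fun i => ‖x i‖) (fun i _ => norm_nonneg _) hkK
    have hq0 : 0 ≤ ‖q‖ := norm_nonneg _
    linarith
end

section
/- Under the assumptions of the previous statement (T a cutter with I − T closed at 0, F satisfying the coercivity Condition, step sizes ρ_k → 0 with Σρ_k = ∞, relaxations α_k ∈ [μ, 2−μ]), any sequence {x^k} generated by the algorithm x^{k+1} = P_{α_k}(z^k) satisfies lim_{k→∞} dist(x^k, Fix(T)) = 0 and lim_{k→∞} ‖x^{k+1} − x^k‖ = 0. -/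
open Classical
open scoped RealInnerProductSpace

section Helpers

variable {H : Type*} [NormedAddCommGroup H] [InnerProductSpace ℝ H]

lemma my_sq_le_sq_nonneg {a b : ℝ} (ha : 0 ≤ a) (hb : 0 ≤ b) (h : a^2 ≤ b^2) : a ≤ b := by
  nlinarith

lemma my_helper_step (zz w p : H) (a : ℝ) (ha : 0 ≤ a)
    (hw : ⟪zz - p, w - p⟫ ≤ 0) :
    ‖zz + a • (p - zz) - w‖ ^ 2 ≤ ‖zz - w‖ ^ 2 - a * (2 - a) * ‖p - zz‖ ^ 2 := by
  have h1 : zz + a • (p - zz) - w = (zz - w) + a • (p - zz) := by abel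
  rw [h1, norm_add_sq_real, real_inner_smul_right, norm_smul, Real.norm_eq_abs,
    abs_of_nonneg ha, mul_pow]
  have hid : ⟪zz - p, w - p⟫ = ⟪zz - w, p - zz⟫ + ‖p - zz‖ ^ 2 := by
    rw [← real_inner_self_eq_norm_sq]
    simp only [inner_sub_left, inner_sub_right]
    rw [real_inner_comm p zz, real_inner_comm w zz, real_inner_comm w p]
    ring
  nlinarith [hw, hid, sq_nonneg (‖p - zz‖)]

lemma my_helper_proj_le (zz w p : H) (hw : ⟪zz - p, w - p⟫ ≤ 0) : ‖p - zz‖ ≤ ‖zz - w‖ := by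
  have h1 : zz - w = (zz - p) - (w - p) := by abel
  have h2 : ‖zz - w‖ ^ 2 = ‖zz - p‖ ^ 2 - 2 * ⟪zz - p, w - p⟫ + ‖w - p‖ ^ 2 := by
    rw [h1, norm_sub_sq_real]
  have h4 : ‖p - zz‖ = ‖zz - p‖ := norm_sub_rev _ _
  refine my_sq_le_sq_nonneg (norm_nonneg _) (norm_nonneg _) ?_
  rw [h4]; nlinarith [sq_nonneg ‖w - p‖]

lemma my_helper_proj_ge (xx t p : H) (hp : ⟪p - t, xx - t⟫ ≤ 0) : ‖xx - t‖ ≤ ‖xx - p‖ := by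
  have key : ‖xx - t‖ ^ 2 ≤ ⟪xx - p, xx - t⟫ := by
    have h1 : xx - p = (xx - t) - (p - t) := by abel
    rw [h1, inner_sub_left, real_inner_self_eq_norm_sq]
    linarith
  rcases eq_or_lt_of_le (norm_nonneg (xx - t)) with h0 | h0
  · rw [← h0]; exact norm_nonneg _
  · have hcs := real_inner_le_norm (xx - p) (xx - t)
    nlinarith

end Helpers

set_option maxHeartbeats 1000000 in
theorem stmt_18 (n : ℕ) (T F : EuclideanSpace ℝ (Fin n) → EuclideanSpace ℝ (Fin n))
    (hFix : {x | T x = x}.Nonempty)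
    (hcut : ∀ x : EuclideanSpace ℝ (Fin n), ∀ w ∈ {x | T x = x},
      ⟪T x - x, T x - w⟫ ≤ 0)
    (hclosed : ∀ (u : ℕ → EuclideanSpace ℝ (Fin n)) (y : EuclideanSpace ℝ (Fin n)),
      Filter.Tendsto u Filter.atTop (nhds y) →
      Filter.Tendsto (fun k => ‖T (u k) - u k‖) Filter.atTop (nhds 0) →
      T y = y)
    (μ : ℝ) (hμ : μ ∈ Set.Ioo (0 : ℝ) 1)
    (α : ℕ → ℝ) (hα : ∀ k, α k ∈ Set.Icc μ (2 - μ))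
    (ρ : ℕ → ℝ) (hρpos : ∀ k, 0 < ρ k)
    (hρ0 : Filter.Tendsto ρ Filter.atTop (nhds 0))
    (hρsum : ¬ Summable ρ)
    (q : EuclideanSpace ℝ (Fin n)) (hq : T q = q) (β : ℝ) (hβ : 0 < β)
    (E : Set (EuclideanSpace ℝ (Fin n))) (hE : Bornology.IsBounded E)
    (hcoerc : ∀ x ∉ E, ⟪F x, x - q⟫ ≥ β * ‖F x‖)
    (x z : ℕ → EuclideanSpace ℝ (Fin n))
    (P : ℕ → EuclideanSpace ℝ (Fin n) → EuclideanSpace ℝ (Fin n))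
    (hP : ∀ k y, P k y ∈ {u | ⟪u - T (x k), x k - T (x k)⟫ ≤ 0} ∧
      ∀ u ∈ {u | ⟪u - T (x k), x k - T (x k)⟫ ≤ 0}, ⟪y - P k y, u - P k y⟫ ≤ 0)
    (hz : ∀ k, z k = if F (x k) ≠ 0 then x k - (ρ k / ‖F (x k)‖) • F (x k) else x k)
    (hiter : ∀ k, x (k + 1) = z k + α k • (P k (z k) - z k)) :
    Filter.Tendsto (fun k => Metric.infDist (x k) {x | T x = x}) Filter.atTop (nhds 0) ∧
    Filter.Tendsto (fun k => ‖x (k + 1) - x k‖) Filter.atTop (nhds 0) := by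
  have hμ0 := hμ.1
  have hμ1 := hμ.2
  set S : Set (EuclideanSpace ℝ (Fin n)) := {x | T x = x} with hS
  have hqS : q ∈ S := hq
  set c : ℝ := μ * (2 - μ) with hcdef
  have hc : 0 < c := by nlinarith
  have hc1 : c ≤ 1 := by nlinarith [sq_nonneg (1 - μ)]
  set D : ℕ → ℝ := fun k => Metric.infDist (x k) S with hDdef
  have hDnn : ∀ k, 0 ≤ D k := fun k => Metric.infDist_nonneg
  -- Fix T ⊆ H_k
  have hH : ∀ k, ∀ w ∈ S, ⟪w - T (x k), x k - T (x k)⟫ ≤ 0 := by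
    intro k w hw
    have h := hcut (x k) w hw
    rw [← neg_sub (T (x k)) w, ← neg_sub (T (x k)) (x k), inner_neg_neg,
      real_inner_comm]
    exact h
  have hαnn : ∀ k, 0 ≤ α k := fun k => le_trans hμ0.le (hα k).1
  -- main one-step Fejér-type inequality
  have hstep : ∀ k, ∀ w : EuclideanSpace ℝ (Fin n),
      ⟪w - T (x k), x k - T (x k)⟫ ≤ 0 →
      ‖x (k+1) - w‖^2 + c * ‖P k (z k) - z k‖^2 ≤ ‖z k - w‖^2 := by
    intro k w hwH
    have hobt : ⟪z k - P k (z k), w - P k (z k)⟫ ≤ 0 := (hP k (z k)).2 w hwH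
    have h1 := my_helper_step (z k) w (P k (z k)) (α k) (hαnn k) hobt
    rw [hiter k]
    have hαc : c ≤ α k * (2 - α k) := by
      have h2 := (hα k).1; have h3 := (hα k).2
      nlinarith
    nlinarith [sq_nonneg ‖P k (z k) - z k‖,
      mul_le_mul_of_nonneg_right hαc (sq_nonneg ‖P k (z k) - z k‖)]
  have hstepS : ∀ k, ∀ w ∈ S, ‖x (k+1) - w‖^2 + c * ‖P k (z k) - z k‖^2 ≤ ‖z k - w‖^2 :=
    fun k w hw => hstep k w (hH k w hw)
  have hstepS' : ∀ k, ∀ w ∈ S, ‖x (k+1) - w‖ ≤ ‖z k - w‖ := by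
    intro k w hw
    refine my_sq_le_sq_nonneg (norm_nonneg _) (norm_nonneg _) ?_
    have := hstepS k w hw
    nlinarith [mul_nonneg hc.le (sq_nonneg ‖P k (z k) - z k‖)]
  -- step bound
  have hzx : ∀ k, ‖z k - x k‖ ≤ ρ k := by
    intro k
    rw [hz k]
    split_ifs with hF
    · have hFn : 0 < ‖F (x k)‖ := norm_pos_iff.2 hF
      have : x k - (ρ k / ‖F (x k)‖) • F (x k) - x k = -((ρ k / ‖F (x k)‖) • F (x k)) := by
        abel
      rw [this, norm_neg, norm_smul, Real.norm_eq_abs,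
        abs_of_nonneg (div_nonneg (hρpos k).le (norm_nonneg _))]
      rw [div_mul_cancel₀]
      exact hFn.ne'
    · simp [(hρpos k).le]
  have hzw : ∀ k, ∀ w : EuclideanSpace ℝ (Fin n), ‖z k - w‖ ≤ ‖x k - w‖ + ρ k := by
    intro k w
    calc ‖z k - w‖ ≤ ‖z k - x k‖ + ‖x k - w‖ := by
          have : z k - w = (z k - x k) + (x k - w) := by abel
          rw [this]; exact norm_add_le _ _
      _ ≤ ‖x k - w‖ + ρ k := by linarith [hzx k]
  -- coercive decrease outside E
  have hdec : ∀ k, x k ∉ E → F (x k) ≠ 0 →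
      ‖z k - q‖^2 ≤ ‖x k - q‖^2 - 2*β*ρ k + ρ k^2 := by
    intro k hEm hF
    have hFn : 0 < ‖F (x k)‖ := norm_pos_iff.2 hF
    set t : ℝ := ρ k / ‖F (x k)‖ with ht
    have htpos : 0 < t := div_pos (hρpos k) hFn
    have hzk : z k - q = (x k - q) - t • F (x k) := by
      rw [hz k, if_pos hF]; abel
    rw [hzk, norm_sub_sq_real, real_inner_smul_right, norm_smul, Real.norm_eq_abs,
      abs_of_nonneg htpos.le, mul_pow]
    have htF : t * ‖F (x k)‖ = ρ k := div_mul_cancel₀ _ hFn.ne'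
    have hco := hcoerc (x k) hEm
    have hico : ⟪x k - q, F (x k)⟫ = ⟪F (x k), x k - q⟫ := real_inner_comm _ _
    have h1 : β * ρ k ≤ t * ⟪x k - q, F (x k)⟫ := by
      rw [hico]
      calc β * ρ k = t * (β * ‖F (x k)‖) := by
            rw [← htF]; ring
        _ ≤ t * ⟪F (x k), x k - q⟫ := by
            exact mul_le_mul_of_nonneg_left hco htpos.le
    have h2 : t^2 * ‖F (x k)‖^2 = ρ k ^ 2 := by
      rw [← mul_pow, htF]
    nlinarith
  -- boundedness of the sequence
  obtain ⟨R0, hR0⟩ := hE.subset_closedBall q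
  set R : ℝ := max R0 0 with hRdef
  have hR : E ⊆ Metric.closedBall q R :=
    hR0.trans (Metric.closedBall_subset_closedBall (le_max_left _ _))
  have hRnn : 0 ≤ R := le_max_right _ _
  obtain ⟨K0, hK0⟩ := (Metric.tendsto_atTop.1 hρ0) (min β 1) (by positivity)
  have hK0' : ∀ k ≥ K0, ρ k < min β 1 := by
    intro k hk
    have := hK0 k hk
    rwa [Real.dist_0_eq_abs, abs_of_pos (hρpos k)] at this
  have hmono : ∀ m, ‖x (K0 + m) - q‖ ≤ max ‖x K0 - q‖ (R + 1) := by
    intro m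
    induction m with
    | zero => simpa using le_max_left _ _
    | succ m ih =>
      have hj : K0 + m ≥ K0 := Nat.le_add_right _ _
      have hρj := hK0' (K0 + m) hj
      have hρβ : ρ (K0 + m) ≤ β := le_trans hρj.le (min_le_left _ _)
      have hρ1 : ρ (K0 + m) ≤ 1 := le_trans hρj.le (min_le_right _ _)
      have hiter' : ‖x (K0 + m + 1) - q‖ ≤ ‖z (K0 + m) - q‖ := hstepS' _ q hqS
      have hsucc : K0 + (m + 1) = (K0 + m) + 1 := by ring
      rw [hsucc]
      by_cases hF : F (x (K0 + m)) = 0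
      · have hzq : z (K0 + m) = x (K0 + m) := by
          rw [hz (K0 + m), if_neg (by simpa using hF)]
        rw [hzq] at hiter'
        exact le_trans hiter' ih
      · by_cases hEm : x (K0 + m) ∈ E
        · have hxR : ‖x (K0 + m) - q‖ ≤ R := by
            have := hR hEm
            rwa [Metric.mem_closedBall, dist_eq_norm] at this
          have : ‖z (K0 + m) - q‖ ≤ R + 1 := by
            calc ‖z (K0 + m) - q‖ ≤ ‖x (K0 + m) - q‖ + ρ (K0 + m) := hzw _ _
              _ ≤ R + 1 := by linarith
          exact le_trans (le_trans hiter' this) (le_max_right _ _)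
        · have h1 := hdec (K0 + m) hEm hF
          have h2 : ‖z (K0 + m) - q‖ ≤ ‖x (K0 + m) - q‖ := by
            refine my_sq_le_sq_nonneg (norm_nonneg _) (norm_nonneg _) ?_
            nlinarith [hρpos (K0 + m)]
          exact le_trans (le_trans hiter' h2) ih
  set C0 : ℝ := (Finset.range (K0 + 1)).sup' (by simp) (fun k => ‖x k - q‖) with hC0
  set C : ℝ := max C0 (max ‖x K0 - q‖ (R + 1)) with hCdef
  have hxC : ∀ k, ‖x k - q‖ ≤ C := by
    intro k
    rcases le_or_gt k K0 with hk | hk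
    · refine le_trans ?_ (le_max_left _ _)
      exact Finset.le_sup' (f := fun k => ‖x k - q‖) (Finset.mem_range.2 (Nat.lt_succ_of_le hk))
    · obtain ⟨m, rfl⟩ := Nat.exists_eq_add_of_le hk.le
      exact le_trans (hmono m) (le_max_right _ _)
  have hCpos : 0 < C := by
    have : (0:ℝ) < R + 1 := by linarith
    calc (0:ℝ) < R + 1 := this
      _ ≤ max ‖x K0 - q‖ (R + 1) := le_max_right _ _
      _ ≤ C := le_max_right _ _
  have hDC : ∀ k, D k ≤ C := by
    intro k
    calc D k ≤ dist (x k) q := Metric.infDist_le_dist_of_mem hqS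
      _ = ‖x k - q‖ := dist_eq_norm _ _
      _ ≤ C := hxC k
  -- key recursion on infDist
  have hkey : ∀ k, D (k+1)^2 + c * ‖P k (z k) - z k‖^2 ≤ (D k + ρ k)^2 := by
    intro k
    by_contra hcon
    push_neg at hcon
    set L : ℝ := D (k+1)^2 + c * ‖P k (z k) - z k‖^2 with hL
    have hLnn : 0 ≤ L := by positivity
    have h2 : D k + ρ k < Real.sqrt L := by
      rw [Real.lt_sqrt (add_nonneg (hDnn k) (hρpos k).le)]
      exact hcon
    have h3 : D k < Real.sqrt L - ρ k := by linarith
    obtain ⟨w, hwS, hww⟩ := (Metric.infDist_lt_iff hFix).1 h3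
    rw [dist_eq_norm] at hww
    have h4 : ‖z k - w‖ < Real.sqrt L := by
      have := hzw k w
      linarith
    have h5 : ‖z k - w‖^2 < L := by
      rw [← Real.lt_sqrt (norm_nonneg _)]
      exact h4
    have h6 : D (k+1) ≤ ‖x (k+1) - w‖ := by
      calc D (k+1) ≤ dist (x (k+1)) w := Metric.infDist_le_dist_of_mem hwS
        _ = ‖x (k+1) - w‖ := dist_eq_norm _ _
    have h7 : D (k+1)^2 ≤ ‖x (k+1) - w‖^2 :=
      pow_le_pow_left₀ (hDnn (k+1)) h6 2
    have h8 := hstepS k w hwS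
    linarith
  have hDstep : ∀ k, D (k+1) ≤ D k + ρ k := by
    intro k
    have := hkey k
    have h2 : D (k+1)^2 ≤ (D k + ρ k)^2 := by
      nlinarith [mul_nonneg hc.le (sq_nonneg ‖P k (z k) - z k‖)]
    refine my_sq_le_sq_nonneg (hDnn _) (add_nonneg (hDnn k) (hρpos k).le) h2
  -- lower bound on displacement
  have hPzlow : ∀ k, ‖x k - T (x k)‖ - ρ k ≤ ‖P k (z k) - z k‖ := by
    intro k
    have h1 : ‖x k - T (x k)‖ ≤ ‖x k - P k (z k)‖ :=
      my_helper_proj_ge (x k) (T (x k)) (P k (z k)) (hP k (z k)).1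
    have h2 : ‖x k - P k (z k)‖ ≤ ‖x k - z k‖ + ‖z k - P k (z k)‖ := by
      have : x k - P k (z k) = (x k - z k) + (z k - P k (z k)) := by abel
      rw [this]; exact norm_add_le _ _
    have h3 : ‖x k - z k‖ = ‖z k - x k‖ := norm_sub_rev _ _
    have h4 : ‖z k - P k (z k)‖ = ‖P k (z k) - z k‖ := norm_sub_rev _ _
    have h5 := hzx k
    linarith
  -- upper bound on displacement
  have hPzup : ∀ k, ‖P k (z k) - z k‖ ≤ D k + ρ k := by
    intro k
    by_contra hcon
    push_neg at hcon
    have h3 : D k < ‖P k (z k) - z k‖ - ρ k := by linarith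
    obtain ⟨w, hwS, hww⟩ := (Metric.infDist_lt_iff hFix).1 h3
    rw [dist_eq_norm] at hww
    have h1 : ‖P k (z k) - z k‖ ≤ ‖z k - w‖ :=
      my_helper_proj_le (z k) w (P k (z k)) ((hP k (z k)).2 w (hH k w hwS))
    have := hzw k w
    linarith
  -- compactness: uniform positive displacement away from Fix
  have hgamma : ∀ ε : ℝ, 0 < ε → ∃ γ : ℝ, 0 < γ ∧
      ∀ y : EuclideanSpace ℝ (Fin n), ‖y - q‖ ≤ C → ε ≤ Metric.infDist y S →
        γ ≤ ‖T y - y‖ := by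
    intro ε hε
    by_contra hcon
    push_neg at hcon
    have hsel : ∀ j : ℕ, ∃ y : EuclideanSpace ℝ (Fin n),
        ‖y - q‖ ≤ C ∧ ε ≤ Metric.infDist y S ∧ ‖T y - y‖ < 1 / (j + 1) := by
      intro j
      obtain ⟨y, hy1, hy2, hy3⟩ := hcon (1 / (j + 1)) (by positivity)
      exact ⟨y, hy1, hy2, hy3⟩
    choose u hu1 hu2 hu3 using hsel
    have humem : ∀ j, u j ∈ Metric.closedBall q C := by
      intro j
      rw [Metric.mem_closedBall, dist_eq_norm]
      exact hu1 j
    obtain ⟨y, -, φ, hφ, hty⟩ := (isCompact_closedBall q C).tendsto_subseq humem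
    have hT0 : Filter.Tendsto (fun k => ‖T (u (φ k)) - u (φ k)‖) Filter.atTop (nhds 0) := by
      refine squeeze_zero (fun k => norm_nonneg _) (fun k => (hu3 (φ k)).le) ?_
      refine squeeze_zero (fun k => by positivity) (fun k => ?_)
        tendsto_one_div_add_atTop_nhds_zero_nat
      have hφk : (k:ℝ) ≤ (φ k : ℝ) := by exact_mod_cast hφ.le_apply
      have h1 : (0:ℝ) < (k:ℝ) + 1 := by positivity
      rw [div_le_div_iff₀ (by linarith) h1]
      linarith
    have hyS : T y = y := hclosed (u ∘ φ) y hty hT0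
    have hcont : Filter.Tendsto (fun k => Metric.infDist (u (φ k)) S) Filter.atTop
        (nhds (Metric.infDist y S)) :=
      ((Metric.continuous_infDist_pt S).tendsto y).comp hty
    have hεle : ε ≤ Metric.infDist y S :=
      ge_of_tendsto hcont (Filter.Eventually.of_forall (fun k => hu2 (φ k)))
    rw [Metric.infDist_zero_of_mem (show y ∈ S from hyS)] at hεle
    linarith
  -- main convergence of infDist
  have hD0 : Filter.Tendsto D Filter.atTop (nhds 0) := by
    rw [Metric.tendsto_atTop]
    intro ε hε
    obtain ⟨γ, hγ, hγle⟩ := hgamma (ε/2) (by linarith)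
    set η : ℝ := min (ε/2) (min (γ/2) (min 1 (c * γ^2 / (8 * (2*C+1))))) with hηdef
    have hη : 0 < η := by
      have h1 : 0 < c * γ^2 / (8 * (2*C+1)) := by positivity
      simp only [hηdef, lt_min_iff]
      refine ⟨by linarith, by linarith, by linarith, h1⟩
    have hηε : η ≤ ε/2 := min_le_left _ _
    have hηγ : η ≤ γ/2 := le_trans (min_le_right _ _) (min_le_left _ _)
    have hη1 : η ≤ 1 := le_trans (min_le_right _ _) (le_trans (min_le_right _ _) (min_le_left _ _))
    have hηc : η ≤ c * γ^2 / (8 * (2*C+1)) :=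
      le_trans (min_le_right _ _) (le_trans (min_le_right _ _) (min_le_right _ _))
    have hηC : η * (2*C+1) ≤ c * γ^2 / 8 := by
      have h2 : (0:ℝ) < 2*C+1 := by linarith
      have h2' : (2*C+1 : ℝ) ≠ 0 := h2.ne'
      calc η * (2*C+1) ≤ (c * γ^2 / (8 * (2*C+1))) * (2*C+1) :=
            mul_le_mul_of_nonneg_right hηc h2.le
        _ = c * γ^2 / 8 := by field_simp
    obtain ⟨K, hK⟩ := (Metric.tendsto_atTop.1 hρ0) η hη
    have hKρ : ∀ k ≥ K, ρ k < η := by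
      intro k hk
      have := hK k hk
      rwa [Real.dist_0_eq_abs, abs_of_pos (hρpos k)] at this
    -- sub-claim a
    have hsub_a : ∀ k ≥ K, ε/2 ≤ D k →
        D (k+1)^2 ≤ D k^2 - c*γ^2/8 ∧ D (k+1) ≤ D k := by
      intro k hk hDk
      have hρk := hKρ k hk
      have hρnn := (hρpos k).le
      have hγx : γ ≤ ‖x k - T (x k)‖ := by
        rw [norm_sub_rev]
        exact hγle (x k) (hxC k) hDk
      have hlow : γ / 2 ≤ ‖P k (z k) - z k‖ := by
        have := hPzlow k
        have hργ : ρ k ≤ γ/2 := le_trans hρk.le hηγ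
        linarith
      have hsq : (γ/2)^2 ≤ ‖P k (z k) - z k‖^2 :=
        pow_le_pow_left₀ (by positivity) hlow 2
      have hcsq : c * (γ/2)^2 ≤ c * ‖P k (z k) - z k‖^2 :=
        mul_le_mul_of_nonneg_left hsq hc.le
      have hkeyk := hkey k
      have hDkC := hDC k
      have hDknn := hDnn k
      have hfirst : D (k+1)^2 ≤ D k^2 - c*γ^2/8 := by
        have hexp : (D k + ρ k)^2 ≤ D k^2 + η * (2*C+1) := by
          nlinarith [hρk.le, hη1]
        nlinarith [hηC]
      refine ⟨hfirst, ?_⟩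
      refine my_sq_le_sq_nonneg (hDnn _) hDknn ?_
      nlinarith [hfirst]
    -- sub-claim b : the sequence eventually drops below ε/2 + η
    have hsub_b : ∃ k0, K ≤ k0 ∧ D k0 < ε/2 + η := by
      by_contra hcon
      push_neg at hcon
      have hall : ∀ k ≥ K, ε/2 ≤ D k := by
        intro k hk
        have := hcon k hk
        linarith
      have hind : ∀ m : ℕ, D (K + m)^2 ≤ D K^2 - m * (c*γ^2/8) := by
        intro m
        induction m with
        | zero => simp
        | succ m ih =>
          have hk : K + m ≥ K := Nat.le_add_right _ _
          have h1 := (hsub_a (K + m) hk (hall _ hk)).1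
          have hsucc : K + (m + 1) = (K + m) + 1 := by ring
          rw [hsucc]
          push_cast
          linarith
      obtain ⟨m, hm⟩ := exists_nat_gt (D K^2 / (c*γ^2/8))
      have hpos : (0:ℝ) < c*γ^2/8 := by positivity
      have h2 : D K^2 < m * (c*γ^2/8) := by
        rw [div_lt_iff₀ hpos] at hm
        exact hm
      have h3 := hind m
      nlinarith [hDnn (K + m)]
    obtain ⟨k0, hk0K, hk0⟩ := hsub_b
    -- sub-claim c : stays below ε/2 + η forever
    have hsub_c : ∀ k ≥ k0, D k < ε/2 + η := by
      intro k hk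
      obtain ⟨m, rfl⟩ := Nat.exists_eq_add_of_le hk
      clear hk
      induction m with
      | zero => simpa using hk0
      | succ m ih =>
        have hsucc : k0 + (m + 1) = (k0 + m) + 1 := by ring
        rw [hsucc]
        have hkK : k0 + m ≥ K := le_trans hk0K (Nat.le_add_right _ _)
        rcases lt_or_ge (D (k0 + m)) (ε/2) with hsmall | hbig
        · have := hDstep (k0 + m)
          have := hKρ (k0 + m) hkK
          linarith
        · have := (hsub_a (k0 + m) hkK hbig).2
          linarith
    refine ⟨max K k0, fun k hk => ?_⟩
    have hkk0 : k ≥ k0 := le_trans (le_max_right _ _) hk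
    have := hsub_c k hkk0
    rw [Real.dist_0_eq_abs, abs_of_nonneg (hDnn k)]
    linarith
  constructor
  · exact hD0
  · -- second limit
    have hbnd : ∀ k, ‖x (k+1) - x k‖ ≤ 3 * ρ k + 2 * D k := by
      intro k
      have h1 : x (k+1) - x k = (z k - x k) + α k • (P k (z k) - z k) := by
        rw [hiter k]; abel
      have h2 : ‖α k • (P k (z k) - z k)‖ ≤ 2 * ‖P k (z k) - z k‖ := by
        rw [norm_smul, Real.norm_eq_abs, abs_of_nonneg (hαnn k)]
        have h3 : α k ≤ 2 := by
          have := (hα k).2; linarith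
        exact mul_le_mul_of_nonneg_right h3 (norm_nonneg _)
      calc ‖x (k+1) - x k‖ ≤ ‖z k - x k‖ + ‖α k • (P k (z k) - z k)‖ := by
            rw [h1]; exact norm_add_le _ _
        _ ≤ ρ k + 2 * ‖P k (z k) - z k‖ := by linarith [hzx k, h2]
        _ ≤ ρ k + 2 * (D k + ρ k) := by linarith [hPzup k]
        _ = 3 * ρ k + 2 * D k := by ring
    refine squeeze_zero (fun k => norm_nonneg _) hbnd ?_
    have := (hρ0.const_mul (3:ℝ)).add (hD0.const_mul (2:ℝ))
    simpa using this
end
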